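/- For the fundamental soliton q(t) = 2σ sech(2σt), the time-bandwidth product T_w(ε)·B_w(ε) satisfies T_w(ε)·B_w(ε) → π^{-2} ln²(2/ε)·(1 + o(1)) as ε → 0; more precisely, lim_{ε→0} T_w(ε)B_w(ε)/ln²(2/ε) = π^{-2}. -/

import Mathlib

open Complex MeasureTheory Filter Topology Real

lemma my_hasDerivAt_tanh (x : ℝ) : HasDerivAt Real.tanh ((Real.cosh x)⁻¹ ^ 2) x := by
  have h := (Real.hasDerivAt_sinh x).div (Real.hasDerivAt_cosh x) (Real.cosh_pos x).ne'
  have hf : (Real.sinh / Real.cosh) = Real.tanh :=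
    funext fun y => (Real.tanh_eq_sinh_div_cosh y).symm
  rw [hf] at h
  refine h.congr_deriv ?_
  have := Real.cosh_sq_sub_sinh_sq x
  field_simp
  nlinarith [Real.cosh_pos x]

lemma my_sech_sq_integral (a : ℝ) (ha : a ≠ 0) (c d : ℝ) :
    ∫ t in c..d, (Real.cosh (a * t))⁻¹ ^ 2
      = (Real.tanh (a * d) - Real.tanh (a * c)) / a := by
  have hderiv : ∀ t ∈ Set.uIcc c d,
      HasDerivAt (fun t => Real.tanh (a * t) / a) ((Real.cosh (a * t))⁻¹ ^ 2) t := by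
    intro t _
    have h1 : HasDerivAt (fun t : ℝ => a * t) a t := by
      simpa using (hasDerivAt_id t).const_mul a
    have h2 := (my_hasDerivAt_tanh (a * t)).comp t h1
    have h3 := h2.div_const a
    refine h3.congr_deriv ?_
    field_simp
  have hint : IntervalIntegrable (fun t => (Real.cosh (a * t))⁻¹ ^ 2) volume c d := by
    apply Continuous.intervalIntegrable
    exact ((Real.continuous_cosh.comp (continuous_const.mul continuous_id)).inv₀
      (fun t => (Real.cosh_pos _).ne')).pow 2
  have := intervalIntegral.integral_eq_sub_of_hasDerivAt hderiv hint
  rw [this]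
  ring

lemma my_tanh_lt_one (x : ℝ) : Real.tanh x < 1 := by
  rw [Real.tanh_eq_sinh_div_cosh, div_lt_one (Real.cosh_pos x)]
  exact Real.sinh_lt_cosh x

lemma my_tanh_solve {x y : ℝ} (h : Real.tanh x = y) :
    x = Real.log ((1 + y) / (1 - y)) / 2 := by
  have hy1 : y < 1 := h ▸ my_tanh_lt_one x
  have hcp := Real.cosh_pos x
  have hE : Real.exp x * Real.exp x * (1 - y) = 1 + y := by
    rw [Real.tanh_eq_sinh_div_cosh, div_eq_iff hcp.ne'] at h
    rw [Real.sinh_eq, Real.cosh_eq, Real.exp_neg] at h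
    have hEpos := Real.exp_pos x
    field_simp at h ⊢
    nlinarith [h]
  have h2 : Real.exp (2 * x) = (1 + y) / (1 - y) := by
    rw [two_mul, Real.exp_add, eq_div_iff (by linarith : (1:ℝ) - y ≠ 0)]
    exact hE
  have := congrArg Real.log h2
  rw [Real.log_exp] at this
  linarith

lemma my_fourier_sech (w : ℝ) :
    ∫ t : ℝ, ((Real.cosh t)⁻¹ : ℝ) * Complex.exp (-(Complex.I * w * t))
      = (π : ℂ) / (Real.cosh (π * w / 2) : ℝ) := by
  set u : ℂ := (1 - Complex.I * w) / 2 with hu_def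
  set v : ℂ := (1 + Complex.I * w) / 2 with hv_def
  have hu : 0 < u.re := by simp [hu_def]
  have hv : 0 < v.re := by simp [hv_def]
  set g : ℝ → ℂ := fun t => ((Real.cosh t)⁻¹ : ℝ) * Complex.exp (-(Complex.I * w * t)) with hg
  set φ : ℝ → ℝ := fun x => (Real.log x - Real.log (1 - x)) / 2 with hφ
  have himg : φ '' Set.Ioo 0 1 = Set.univ := by
    apply Set.eq_univ_of_forall
    intro t
    refine ⟨(1 + Real.exp (-(2*t)))⁻¹, ?_, ?_⟩
    · constructor
      · positivity
      · rw [inv_lt_one_iff₀]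
        right; linarith [Real.exp_pos (-(2*t))]
    · have he : (0:ℝ) < Real.exp (-(2*t)) := Real.exp_pos _
      have h1 : (0:ℝ) < 1 + Real.exp (-(2*t)) := by linarith
      have h1x : 1 - (1 + Real.exp (-(2*t)))⁻¹ = Real.exp (-(2*t)) / (1 + Real.exp (-(2*t))) := by
        field_simp
        ring
      rw [hφ]
      simp only
      rw [h1x, Real.log_inv, Real.log_div he.ne' h1.ne', Real.log_exp]
      ring
  have hderiv : ∀ x ∈ Set.Ioo (0:ℝ) 1,
      HasDerivAt φ ((2 * x * (1 - x))⁻¹) x := by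
    rintro x ⟨hx0, hx1⟩
    have h1 : HasDerivAt Real.log x⁻¹ x := by
      simpa using Real.hasDerivAt_log hx0.ne'
    have h2 : HasDerivAt (fun x : ℝ => Real.log (1 - x)) (-(1 - x)⁻¹) x := by
      have ha : HasDerivAt (fun x : ℝ => 1 - x) (-1) x := by
        simpa using (hasDerivAt_id x).const_sub 1
      have := (Real.hasDerivAt_log (by linarith : (1:ℝ) - x ≠ 0)).comp x ha
      refine this.congr_deriv ?_; ring
    have h3 := (h1.sub h2).div_const 2
    refine h3.congr_deriv ?_
    have : x ≠ 0 := hx0.ne'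
    have : (1:ℝ) - x ≠ 0 := by linarith
    field_simp
    ring
  have hinj : Set.InjOn φ (Set.Ioo 0 1) := by
    have hmono : StrictMonoOn φ (Set.Ioo 0 1) := by
      rintro x ⟨hx0, hx1⟩ y ⟨hy0, hy1⟩ hxy
      have l1 : Real.log x < Real.log y := Real.log_lt_log hx0 hxy
      have l2 : Real.log (1 - y) < Real.log (1 - x) :=
        Real.log_lt_log (by linarith) (by linarith)
      rw [hφ]; simp only; linarith
    exact hmono.injOn
  have key : (∫ t : ℝ, g t) = ∫ x in Set.Ioo (0:ℝ) 1, |(2 * x * (1 - x))⁻¹| • g (φ x) := by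
    rw [← setIntegral_univ, ← himg]
    exact integral_image_eq_integral_abs_deriv_smul measurableSet_Ioo
      (fun x hx => (hderiv x hx).hasDerivWithinAt) hinj g
  have hpoint : ∀ x ∈ Set.Ioo (0:ℝ) 1,
      |(2 * x * (1 - x))⁻¹| • g (φ x)
        = (x : ℂ) ^ (u - 1) * (1 - (x : ℂ)) ^ (v - 1) := by
    rintro x ⟨hx0, hx1⟩
    have hx1' : (0:ℝ) < 1 - x := by linarith
    set a := Real.log x with ha
    set b := Real.log (1 - x) with hb
    have hea : Real.exp a = x := Real.exp_log hx0
    have heb : Real.exp b = 1 - x := Real.exp_log hx1'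
    have hφx : φ x = (a - b) / 2 := rfl
    -- real scalar part
    have hcosh : Real.cosh (φ x) * (2 * Real.exp ((a + b) / 2)) = 1 := by
      have e1 : Real.exp ((a - b) / 2) * Real.exp ((a + b) / 2) = x := by
        rw [← Real.exp_add, show (a - b) / 2 + (a + b) / 2 = a by ring, hea]
      have e2 : Real.exp (-((a - b) / 2)) * Real.exp ((a + b) / 2) = 1 - x := by
        rw [← Real.exp_add, show -((a - b) / 2) + (a + b) / 2 = b by ring, heb]
      rw [hφx, Real.cosh_eq]
      nlinarith [e1, e2]
    have hsech : (Real.cosh (φ x))⁻¹ = 2 * Real.exp ((a + b) / 2) :=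
      inv_eq_of_mul_eq_one_right hcosh
    have hscal : |(2 * x * (1 - x))⁻¹| * (Real.cosh (φ x))⁻¹ = Real.exp (-(a + b) / 2) := by
      have hkey : Real.exp (-(a + b) / 2) * (2 * x * (1 - x)) = 2 * Real.exp ((a + b) / 2) := by
        rw [← heb, ← hea,
          show Real.exp (-(a + b) / 2) * (2 * Real.exp a * Real.exp b)
            = 2 * (Real.exp (-(a + b) / 2) * (Real.exp a * Real.exp b)) from by ring,
          ← Real.exp_add, ← Real.exp_add, show -(a + b) / 2 + (a + b) = (a + b) / 2 by ring]
      rw [hsech, abs_inv, abs_of_pos (by positivity : (0:ℝ) < 2 * x * (1 - x)),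
        inv_mul_eq_div, div_eq_iff (by positivity : (2 * x * (1 - x)) ≠ 0)]
      exact hkey.symm
    -- cpow to exp
    have hxne : (x : ℂ) ≠ 0 := by exact_mod_cast hx0.ne'
    have hx1ne : (1 - (x:ℂ)) ≠ 0 := by
      rw [show (1 - (x:ℂ)) = ((1 - x : ℝ) : ℂ) by push_cast; ring]
      exact_mod_cast hx1'.ne'
    have hlogx : Complex.log (x : ℂ) = (a : ℂ) := by
      rw [ha, Complex.ofReal_log hx0.le]
    have hlogx1 : Complex.log (1 - (x:ℂ)) = (b : ℂ) := by
      rw [show (1 - (x:ℂ)) = ((1 - x : ℝ) : ℂ) by push_cast; ring]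
      rw [hb, Complex.ofReal_log hx1'.le]
    calc |(2 * x * (1 - x))⁻¹| • g (φ x)
        = ((|(2 * x * (1 - x))⁻¹| * (Real.cosh (φ x))⁻¹ : ℝ) : ℂ)
            * Complex.exp (-(Complex.I * w * (φ x : ℝ))) := by
          rw [hg]; simp only [real_smul]; push_cast; ring
      _ = Complex.exp ((-(a + b) / 2 : ℝ) + -(Complex.I * w * (((a : ℂ) - b) / 2))) := by
          rw [hscal, hφx, Complex.ofReal_exp, ← Complex.exp_add]
          congr 1
          push_cast
          ring
      _ = Complex.exp ((u - 1) * (a : ℂ) + (v - 1) * (b : ℂ)) := by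
          congr 1
          rw [hu_def, hv_def]
          push_cast
          ring
      _ = (x : ℂ) ^ (u - 1) * (1 - (x : ℂ)) ^ (v - 1) := by
          rw [Complex.cpow_def_of_ne_zero hxne, Complex.cpow_def_of_ne_zero hx1ne, hlogx,
            hlogx1, ← Complex.exp_add]
          congr 1
          ring
  have hbeta : (∫ x in Set.Ioo (0:ℝ) 1, (x : ℂ) ^ (u - 1) * (1 - (x : ℂ)) ^ (v - 1))
      = Complex.betaIntegral u v := by
    rw [Complex.betaIntegral, intervalIntegral.integral_of_le zero_le_one,
      integral_Ioc_eq_integral_Ioo]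
  have hval : Complex.betaIntegral u v = (π : ℂ) / (Real.cosh (π * w / 2) : ℝ) := by
    have h1 := Complex.Gamma_mul_Gamma_eq_betaIntegral hu hv
    have huv : u + v = 1 := by rw [hu_def, hv_def]; ring
    rw [huv, Complex.Gamma_one, one_mul] at h1
    have hvu : v = 1 - u := by rw [hu_def, hv_def]; ring
    rw [← h1, hvu, Complex.Gamma_mul_Gamma_one_sub]
    congr 1
    have : (π : ℂ) * u = π / 2 - (π * w / 2 : ℝ) * Complex.I := by
      rw [hu_def]; push_cast; ring
    rw [this, Complex.sin_pi_div_two_sub, Complex.cos_mul_I, Complex.ofReal_cosh]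
  calc (∫ t : ℝ, g t) = ∫ x in Set.Ioo (0:ℝ) 1, |(2 * x * (1 - x))⁻¹| • g (φ x) := key
    _ = ∫ x in Set.Ioo (0:ℝ) 1, (x : ℂ) ^ (u - 1) * (1 - (x : ℂ)) ^ (v - 1) :=
        setIntegral_congr_fun measurableSet_Ioo hpoint
    _ = Complex.betaIntegral u v := hbeta
    _ = (π : ℂ) / (Real.cosh (π * w / 2) : ℝ) := hval
/-- Time-bandwidth product of the fundamental soliton `q(t) = 2σ sech(2σ t)`:
`lim_{ε→0⁺} T_w(ε) B_w(ε) / ln²(2/ε) = π⁻²`, where `T_w(ε)` and `B_w(ε)` are the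
ε-energy duration and bandwidth (the bandwidth measured in ordinary frequency
`ω/(2π)`). -/
theorem fundamental_soliton_time_bandwidth_product (σ : ℝ) (hσ : 0 < σ)
    (q : ℝ → ℂ)
    (hq : ∀ t : ℝ, q t = 2 * σ * (1 / Real.cosh (2 * σ * t) : ℝ))
    (qhat : ℝ → ℂ)
    (hqhat : ∀ ω : ℝ, qhat ω = ∫ t : ℝ, q t * Complex.exp (-(Complex.I * ω * t)))
    (Tw Bw : ℝ → ℝ)
    (hTw : ∀ ε ∈ Set.Ioo (0:ℝ) 1,
      IsLeast {T : ℝ | 0 ≤ T ∧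
        ∫ t in (-(T/2))..(T/2), ‖q t‖ ^ 2 = (1 - ε) * (4 * σ)} (Tw ε))
    (hBw : ∀ ε ∈ Set.Ioo (0:ℝ) 1,
      IsLeast {B : ℝ | 0 ≤ B ∧
        (1/(2*π)) * ∫ ω in (-(π*B))..(π*B), ‖qhat ω‖ ^ 2 = (1 - ε) * (4 * σ)}
        (Bw ε)) :
    Tendsto (fun ε : ℝ => Tw ε * Bw ε / (Real.log (2/ε)) ^ 2) (𝓝[>] 0)
      (𝓝 (1 / π ^ 2)) := by
  have hσ' : σ ≠ 0 := hσ.ne'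
  have hπ : (0:ℝ) < π := Real.pi_pos
  -- The Fourier transform of the soliton
  have hqhat' : ∀ ω : ℝ, qhat ω = (π : ℂ) / (Real.cosh (π * ω / (4 * σ)) : ℝ) := by
    intro ω
    have hσc : ((σ:ℝ):ℂ) ≠ 0 := by exact_mod_cast hσ'
    have hmain := MeasureTheory.Measure.integral_comp_mul_left
      (fun s : ℝ => ((Real.cosh s)⁻¹ : ℝ) *
        Complex.exp (-(Complex.I * ((ω / (2 * σ) : ℝ) : ℂ) * (s:ℂ)))) (2 * σ)
    rw [my_fourier_sech (ω / (2 * σ))] at hmain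
    have h1 : ∀ t : ℝ, q t * Complex.exp (-(Complex.I * ω * t))
        = (2 * σ : ℂ) * ((fun s : ℝ => ((Real.cosh s)⁻¹ : ℝ) *
            Complex.exp (-(Complex.I * ((ω / (2 * σ) : ℝ) : ℂ) * (s:ℂ)))) (2 * σ * t)) := by
      intro t
      simp only
      have harg : -(Complex.I * (ω:ℂ) * (t:ℂ))
          = -(Complex.I * ((ω / (2 * σ) : ℝ) : ℂ) * ((2 * σ * t : ℝ) : ℂ)) := by
        push_cast
        field_simp
      rw [hq t, ← harg]
      push_cast
      ring
    have h2 : qhat ω = (2 * σ : ℂ) * ∫ t : ℝ, (fun s : ℝ => ((Real.cosh s)⁻¹ : ℝ) *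
        Complex.exp (-(Complex.I * ((ω / (2 * σ) : ℝ) : ℂ) * (s:ℂ)))) (2 * σ * t) := by
      rw [hqhat ω]
      simp_rw [h1]
      exact integral_const_mul _ _
    have hcoshc : ((Real.cosh (π * ω / (4 * σ)) : ℝ) : ℂ) ≠ 0 := by
      exact_mod_cast (Real.cosh_pos (π * ω / (4 * σ))).ne'
    rw [h2, hmain, abs_of_pos (by positivity : (0:ℝ) < (2*σ)⁻¹), real_smul,
      show π * (ω / (2 * σ)) / 2 = π * ω / (4 * σ) by ring]
    push_cast
    field_simp
  -- Energy integrals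
  have hnq : ∀ t : ℝ, ‖q t‖ ^ 2 = (2 * σ) ^ 2 * (Real.cosh (2 * σ * t))⁻¹ ^ 2 := by
    intro t
    have hcast : q t = ((2 * σ * (1 / Real.cosh (2 * σ * t)) : ℝ) : ℂ) := by
      rw [hq t]; push_cast; ring
    rw [hcast, Complex.norm_real, Real.norm_eq_abs,
      abs_of_pos (by positivity : (0:ℝ) < 2 * σ * (1 / Real.cosh (2 * σ * t))), one_div]
    ring
  have hE : ∀ T : ℝ, (∫ t in (-(T/2))..(T/2), ‖q t‖ ^ 2) = 4 * σ * Real.tanh (σ * T) := by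
    intro T
    simp_rw [hnq]
    rw [intervalIntegral.integral_const_mul,
      my_sech_sq_integral (2 * σ) (by positivity) (-(T/2)) (T/2),
      show 2 * σ * (T/2) = σ * T by ring, show 2 * σ * (-(T/2)) = -(σ * T) by ring,
      Real.tanh_neg]
    field_simp
    ring
  have hnqhat : ∀ ω : ℝ, ‖qhat ω‖ ^ 2 = π ^ 2 * (Real.cosh (π / (4 * σ) * ω))⁻¹ ^ 2 := by
    intro ω
    have hcast : qhat ω = ((π / Real.cosh (π / (4 * σ) * ω) : ℝ) : ℂ) := by
      rw [hqhat' ω, show π * ω / (4 * σ) = π / (4 * σ) * ω by ring]; push_cast; ring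
    rw [hcast, Complex.norm_real, Real.norm_eq_abs,
      abs_of_pos (by positivity : (0:ℝ) < π / Real.cosh (π / (4 * σ) * ω)),
      div_eq_mul_inv, mul_pow]
  have hEf : ∀ B : ℝ, (1/(2*π)) * ∫ ω in (-(π*B))..(π*B), ‖qhat ω‖ ^ 2
      = 4 * σ * Real.tanh (π ^ 2 * B / (4 * σ)) := by
    intro B
    simp_rw [hnqhat]
    rw [intervalIntegral.integral_const_mul,
      my_sech_sq_integral (π / (4 * σ)) (by positivity) (-(π*B)) (π*B),
      show π / (4 * σ) * (π * B) = π ^ 2 * B / (4 * σ) by ring,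
      show π / (4 * σ) * (-(π * B)) = -(π ^ 2 * B / (4 * σ)) by ring,
      Real.tanh_neg]
    field_simp
    ring
  -- Identify Tw and Bw
  have hTwv : ∀ ε ∈ Set.Ioo (0:ℝ) 1, Tw ε = Real.log ((2 - ε)/ε) / 2 / σ := by
    intro ε hε
    obtain ⟨⟨_, heq⟩, _⟩ := hTw ε hε
    rw [hE (Tw ε)] at heq
    have h4 : Real.tanh (σ * Tw ε) = 1 - ε :=
      mul_left_cancel₀ (by positivity : (4 * σ : ℝ) ≠ 0) (by linarith)
    have h5 := my_tanh_solve h4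
    rw [show (1 + (1 - ε)) = 2 - ε by ring, show (1 - (1 - ε)) = ε by ring] at h5
    field_simp at h5 ⊢
    linarith
  have hBwv : ∀ ε ∈ Set.Ioo (0:ℝ) 1, Bw ε = 2 * σ * Real.log ((2 - ε)/ε) / π ^ 2 := by
    intro ε hε
    obtain ⟨⟨_, heq⟩, _⟩ := hBw ε hε
    rw [hEf (Bw ε)] at heq
    have h4 : Real.tanh (π ^ 2 * Bw ε / (4 * σ)) = 1 - ε :=
      mul_left_cancel₀ (by positivity : (4 * σ : ℝ) ≠ 0) (by linarith)
    have h5 := my_tanh_solve h4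
    rw [show (1 + (1 - ε)) = 2 - ε by ring, show (1 - (1 - ε)) = ε by ring] at h5
    field_simp at h5 ⊢
    linarith
  -- The limit
  have hmem : Set.Ioo (0:ℝ) 1 ∈ 𝓝[>] (0:ℝ) := Ioo_mem_nhdsGT zero_lt_one
  have hratio : Tendsto (fun ε : ℝ => Real.log ((2 - ε)/ε) / Real.log (2/ε))
      (𝓝[>] 0) (𝓝 1) := by
    have h1 : Tendsto (fun ε : ℝ => Real.log 2 - Real.log ε) (𝓝[>] (0:ℝ)) atTop := by
      have h1a : Tendsto (fun ε : ℝ => -Real.log ε) (𝓝[>] (0:ℝ)) atTop :=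
        tendsto_neg_atTop_iff.mpr Real.tendsto_log_nhdsGT_zero
      simpa [sub_eq_add_neg] using tendsto_atTop_add_const_left (𝓝[>] (0:ℝ)) (Real.log 2) h1a
    have h2 : Tendsto (fun ε : ℝ => Real.log (2 - ε) - Real.log 2) (𝓝[>] (0:ℝ)) (𝓝 0) := by
      have hc : Tendsto (fun ε : ℝ => (2:ℝ) - ε) (𝓝[>] (0:ℝ)) (𝓝 2) := by
        have h0 : Tendsto (fun ε : ℝ => (2:ℝ) - ε) (𝓝 (0:ℝ)) (𝓝 (2 - 0)) :=
          tendsto_const_nhds.sub tendsto_id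
        simpa using h0.mono_left nhdsWithin_le_nhds
      have hl : Tendsto (fun ε : ℝ => Real.log (2 - ε)) (𝓝[>] (0:ℝ)) (𝓝 (Real.log 2)) :=
        ((Real.continuousAt_log two_ne_zero).tendsto.comp hc)
      have h2' := hl.sub (tendsto_const_nhds :
        Tendsto (fun _ : ℝ => Real.log 2) (𝓝[>] (0:ℝ)) (𝓝 (Real.log 2)))
      simpa using h2'
    have h3 := h2.div_atTop h1
    have heq : ∀ᶠ ε in 𝓝[>] (0:ℝ),
        1 + (Real.log (2 - ε) - Real.log 2) / (Real.log 2 - Real.log ε)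
          = Real.log ((2 - ε)/ε) / Real.log (2/ε) := by
      filter_upwards [hmem] with ε hε
      obtain ⟨hε0, hε1⟩ := hε
      have hlogε : Real.log ε < 0 := Real.log_neg hε0 hε1
      have hlog2 : 0 < Real.log 2 := Real.log_pos one_lt_two
      have hM : Real.log 2 - Real.log ε ≠ 0 := by linarith
      rw [Real.log_div (by linarith : (2:ℝ) - ε ≠ 0) hε0.ne',
        Real.log_div two_ne_zero hε0.ne']
      field_simp
      ring
    have h4 : Tendsto (fun ε : ℝ =>
        1 + (Real.log (2 - ε) - Real.log 2) / (Real.log 2 - Real.log ε))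
        (𝓝[>] (0:ℝ)) (𝓝 1) := by
      simpa using tendsto_const_nhds.add h3
    exact Tendsto.congr' heq h4
  have hcongr : ∀ᶠ ε in 𝓝[>] (0:ℝ),
      (1 / π ^ 2) * (Real.log ((2 - ε)/ε) / Real.log (2/ε)) ^ 2
        = Tw ε * Bw ε / (Real.log (2/ε)) ^ 2 := by
    filter_upwards [hmem] with ε hε
    rw [hTwv ε hε, hBwv ε hε]
    have hTB : Real.log ((2 - ε)/ε) / 2 / σ * (2 * σ * Real.log ((2 - ε)/ε) / π ^ 2)
        = (Real.log ((2 - ε)/ε)) ^ 2 / π ^ 2 := by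
      field_simp [hσ']
    rw [hTB, div_pow]
    ring
  have final := (hratio.pow 2).const_mul (1 / π ^ 2 : ℝ)
  rw [one_pow, mul_one] at final
  exact Tendsto.congr' hcongr final
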